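/- Let f : [0,∞) → X be bounded and continuous and let u : [0,∞) → X be a bounded continuous function satisfying the mild-solution identity u(t) = U(t,0) u(0) + ∫_0^t U(t,s) f(s) ds for all t ≥ 0. Then ζ₀ := u(0) − ∫_0^∞ G(0,s) f(s) ds belongs to P(0)X, and u(t) = U(t,0) ζ₀ + ∫_0^∞ G(t,s) f(s) ds for all t ≥ 0. -/

import Mathlib

open MeasureTheory Real Filter Bornology

/-- An evolution family on a Banach space `X` together with an exponential dichotomy:
projections `P t`, the inverses `V s t` of the restrictions of `U t s` to the kernels
of the projections (i.e. `V s t = U_Q(s,t)` for `s ≤ t`), dichotomy constants `N, β`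
and a bound `H` on the norms of the projections. -/
structure EvolutionDichotomy (X : Type*) [NormedAddCommGroup X] [NormedSpace ℝ X] where
  U : ℝ → ℝ → X →L[ℝ] X
  P : ℝ → X →L[ℝ] X
  V : ℝ → ℝ → X →L[ℝ] X
  N : ℝ
  β : ℝ
  H : ℝ
  N_pos : 0 < N
  β_pos : 0 < β
  U_id : ∀ s, U s s = ContinuousLinearMap.id ℝ X
  U_comp : ∀ ⦃s r t : ℝ⦄, s ≤ r → r ≤ t → ∀ x, U t r (U r s x) = U t s x
  U_cont : ∀ x : X, ContinuousOn (fun p : ℝ × ℝ => U p.1 p.2 x) {p : ℝ × ℝ | p.2 ≤ p.1}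
  P_proj : ∀ t x, P t (P t x) = P t x
  P_cont : ∀ x : X, Continuous fun t => P t x
  P_bound : ∀ t, ‖P t‖ ≤ H
  comm : ∀ ⦃s t : ℝ⦄, s ≤ t → ∀ x, P t (U t s x) = U t s (P s x)
  V_mapsTo : ∀ ⦃s t : ℝ⦄, s ≤ t → ∀ x, P s (V s t (x - P t x)) = 0
  V_left : ∀ ⦃s t : ℝ⦄, s ≤ t → ∀ x, V s t (U t s (x - P s x)) = x - P s x
  V_right : ∀ ⦃s t : ℝ⦄, s ≤ t → ∀ x, U t s (V s t (x - P t x)) = x - P t x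
  P_decay : ∀ ⦃s t : ℝ⦄, s ≤ t → ∀ x, ‖U t s (P s x)‖ ≤ N * Real.exp (-β * (t - s)) * ‖x‖
  Q_decay : ∀ ⦃s t : ℝ⦄, s ≤ t → ∀ x, ‖V s t (x - P t x)‖ ≤ N * Real.exp (-β * (t - s)) * ‖x‖

namespace EvolutionDichotomy

variable {X : Type*} [NormedAddCommGroup X] [NormedSpace ℝ X]

/-- The complementary projection `Q t = Id - P t`. -/
noncomputable def Q (E : EvolutionDichotomy X) (t : ℝ) : X →L[ℝ] X :=
  ContinuousLinearMap.id ℝ X - E.P t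

/-- The Green function of the dichotomy: `G t s = P t ∘ U t s` for `t > s` and
`G t s = -(U_Q(t,s) ∘ Q s)` for `t ≤ s`. -/
noncomputable def G (E : EvolutionDichotomy X) (t s : ℝ) : X →L[ℝ] X :=
  if s < t then (E.P t).comp (E.U t s) else -((E.V t s).comp (E.Q s))

/-- The Green function is exponentially almost periodic. -/
def ExpAP (E : EvolutionDichotomy X) : Prop :=
  ∀ η > (0:ℝ), ∀ ε > (0:ℝ), ∃ γ > (0:ℝ), ∃ l > (0:ℝ), ∀ a : ℝ,
    ∃ T ∈ Set.Icc a (a + l), ∀ t s : ℝ, η ≤ |t - s| →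
      ‖E.G (t + T) (s + T) - E.G t s‖ ≤ ε * Real.exp (-γ * |t - s|)

end EvolutionDichotomy

/-- A bounded continuous function `f : ℝ → X` is (Bohr) almost periodic if for every `ε > 0`
there is `l > 0` such that every interval of length `l` contains an `ε`-almost period. -/
def AlmostPeriodic {X : Type*} [NormedAddCommGroup X] (f : ℝ → X) : Prop :=
  Continuous f ∧ Bornology.IsBounded (Set.range f) ∧
  ∀ ε > (0:ℝ), ∃ l > (0:ℝ), ∀ a : ℝ, ∃ T ∈ Set.Icc a (a + l),
    ∀ t : ℝ, ‖f (t + T) - f t‖ < ε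

/-- A function on `[0,∞)` is asymptotically almost periodic if it is the sum of an almost
periodic function and a continuous function vanishing at infinity. -/
def AsympAlmostPeriodic {X : Type*} [NormedAddCommGroup X] (g : ℝ → X) : Prop :=
  ∃ h φ : ℝ → X, AlmostPeriodic h ∧ ContinuousOn φ (Set.Ici 0) ∧
    Filter.Tendsto (fun t => ‖φ t‖) Filter.atTop (nhds 0) ∧
    ∀ t : ℝ, 0 ≤ t → g t = h t + φ t

/-- `PAP0`: bounded continuous functions with vanishing mean value. -/
def PAP0 {X : Type*} [NormedAddCommGroup X] (φ : ℝ → X) : Prop :=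
  Continuous φ ∧ Bornology.IsBounded (Set.range φ) ∧
  Filter.Tendsto (fun r : ℝ => (1 / (2 * r)) * ∫ t in (-r)..r, ‖φ t‖)
    Filter.atTop (nhds 0)

/-- A bounded continuous function is pseudo almost periodic if it is the sum of an almost
periodic function and a `PAP0` function. -/
def PseudoAP {X : Type*} [NormedAddCommGroup X] (f : ℝ → X) : Prop :=
  ∃ g φ : ℝ → X, AlmostPeriodic g ∧ PAP0 φ ∧ ∀ t : ℝ, f t = g t + φ t

section Helpers

namespace EvolutionDichotomy

variable {X : Type*} [NormedAddCommGroup X] [NormedSpace ℝ X]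
variable (E : EvolutionDichotomy X)

lemma Q_apply (t : ℝ) (x : X) : E.Q t x = x - E.P t x := rfl

lemma P_Q (t : ℝ) (x : X) : E.P t (E.Q t x) = 0 := by
  simp [Q_apply, map_sub, E.P_proj]

lemma comm_Q {s t : ℝ} (h : s ≤ t) (x : X) :
    E.Q t (E.U t s x) = E.U t s (E.Q s x) := by
  simp [Q_apply, E.comm h, map_sub]

lemma UV {s t : ℝ} (h : s ≤ t) (x : X) :
    E.U t s (E.V s t (E.Q t x)) = E.Q t x := E.V_right h x

lemma P_VQ {s t : ℝ} (h : s ≤ t) (x : X) :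
    E.P s (E.V s t (E.Q t x)) = 0 := E.V_mapsTo h x

lemma V_left' {s t : ℝ} (h : s ≤ t) {y : X} (hy : E.P s y = 0) :
    E.V s t (E.U t s y) = y := by
  have := E.V_left h y
  rwa [hy, sub_zero] at this

lemma norm_le_of_ker {s t : ℝ} (h : s ≤ t) {y : X} (hy : E.P s y = 0) :
    ‖y‖ ≤ E.N * Real.exp (-E.β * (t - s)) * ‖E.U t s y‖ := by
  have hz : E.P t (E.U t s y) = 0 := by rw [E.comm h, hy, map_zero]
  have := E.Q_decay h (E.U t s y)
  rwa [hz, sub_zero, V_left' E h hy] at this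

lemma norm_le_of_ker' {s t : ℝ} (h : s ≤ t) {y : X} (hy : E.P s y = 0) :
    ‖y‖ ≤ E.N * ‖E.U t s y‖ := by
  refine (E.norm_le_of_ker h hy).trans ?_
  have h1 : Real.exp (-E.β * (t - s)) ≤ 1 := by
    rw [Real.exp_le_one_iff]
    nlinarith [E.β_pos]
  calc E.N * Real.exp (-E.β * (t - s)) * ‖E.U t s y‖
      ≤ E.N * 1 * ‖E.U t s y‖ := by
        gcongr
        exact E.N_pos.le
    _ = E.N * ‖E.U t s y‖ := by ring

lemma U_ker_inj {s t : ℝ} (h : s ≤ t) {y y' : X} (hy : E.P s y = 0)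
    (hy' : E.P s y' = 0) (heq : E.U t s y = E.U t s y') : y = y' := by
  have h0 : E.P s (y - y') = 0 := by rw [map_sub, hy, hy', sub_zero]
  have := E.V_left' h h0
  rw [map_sub, heq, sub_self, map_zero] at this
  exact sub_eq_zero.mp this.symm

end EvolutionDichotomy

end Helpers
section Helpers2
set_option linter.unusedSectionVars false
set_option linter.unusedVariables false

open Set

variable {X : Type*} [NormedAddCommGroup X] [NormedSpace ℝ X]

/-- Continuity of `s ↦ T s (g s)` from strong continuity of the family `T`,
a uniform bound, and continuity of `g`. -/
lemma contOn_apply_family {T : ℝ → X →L[ℝ] X} {g : ℝ → X} {S : Set ℝ} {C : ℝ}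
    (hT : ∀ x : X, ContinuousOn (fun s => T s x) S)
    (hC : ∀ s ∈ S, ‖T s‖ ≤ C)
    (hg : ContinuousOn g S) : ContinuousOn (fun s => T s (g s)) S := by
  intro s₀ hs₀
  have h1 : Tendsto (fun s => T s (g s - g s₀)) (nhdsWithin s₀ S) (nhds 0) := by
    have hb : Tendsto (fun s => C * ‖g s - g s₀‖) (nhdsWithin s₀ S) (nhds 0) := by
      have : Tendsto (fun s => g s - g s₀) (nhdsWithin s₀ S) (nhds 0) := by
        have h0 : Tendsto g (nhdsWithin s₀ S) (nhds (g s₀)) := hg s₀ hs₀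
        simpa using h0.sub (tendsto_const_nhds : Tendsto (fun _ : ℝ => g s₀) _ _)
      simpa using (this.norm.const_mul C)
    refine squeeze_zero_norm' ?_ hb
    filter_upwards [self_mem_nhdsWithin] with s hs
    calc ‖T s (g s - g s₀)‖ ≤ ‖T s‖ * ‖g s - g s₀‖ := (T s).le_opNorm _
      _ ≤ C * ‖g s - g s₀‖ := by
          have := hC s hs
          have h0 := norm_nonneg (g s - g s₀)
          nlinarith
  have h2 : Tendsto (fun s => T s (g s₀)) (nhdsWithin s₀ S) (nhds (T s₀ (g s₀))) :=
    hT (g s₀) s₀ hs₀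
  have := h1.add h2
  rw [zero_add] at this
  refine Tendsto.congr (fun s => ?_) this
  rw [← map_add, sub_add_cancel]

namespace EvolutionDichotomy

variable (E : EvolutionDichotomy X) [CompleteSpace X]

/-- `s ↦ U t s x` is continuous on `Icc 0 t`. -/
lemma U_cont_snd {t : ℝ} (ht : 0 ≤ t) (x : X) :
    ContinuousOn (fun s => E.U t s x) (Icc 0 t) := by
  have hmaps : MapsTo (fun s : ℝ => ((t : ℝ), s)) (Icc 0 t) {p : ℝ × ℝ | p.2 ≤ p.1} :=
    fun s hs => hs.2
  exact (E.U_cont x).comp (continuous_const.prodMk continuous_id).continuousOn hmaps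

/-- `s ↦ U s t x` is continuous on `Ici t`. -/
lemma U_cont_fst (t : ℝ) (x : X) :
    ContinuousOn (fun s => E.U s t x) (Ici t) := by
  have hmaps : MapsTo (fun s : ℝ => (s, (t : ℝ))) (Ici t) {p : ℝ × ℝ | p.2 ≤ p.1} :=
    fun s hs => hs
  exact (E.U_cont x).comp (continuous_id.prodMk continuous_const).continuousOn hmaps

/-- Banach–Steinhaus bound for `U t ·` on `Icc 0 t`. -/
lemma exists_bound_U {t : ℝ} (ht : 0 ≤ t) :
    ∃ C, ∀ s ∈ Icc (0:ℝ) t, ‖E.U t s‖ ≤ C := by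
  have h : ∀ x : X, ∃ C, ∀ i : Icc (0:ℝ) t, ‖E.U t (i : ℝ) x‖ ≤ C := by
    intro x
    obtain ⟨C, hC⟩ := isCompact_Icc.exists_bound_of_continuousOn (E.U_cont_snd ht x)
    exact ⟨C, fun i => hC i i.2⟩
  obtain ⟨C', hC'⟩ := banach_steinhaus h
  exact ⟨C', fun s hs => hC' ⟨s, hs⟩⟩

/-- `s ↦ U t s (g s)` is continuous on `Icc 0 t` for continuous `g`. -/
lemma U_apply_contOn {t : ℝ} (ht : 0 ≤ t) {g : ℝ → X}
    (hg : ContinuousOn g (Icc 0 t)) :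
    ContinuousOn (fun s => E.U t s (g s)) (Icc 0 t) := by
  obtain ⟨C, hC⟩ := E.exists_bound_U ht
  exact contOn_apply_family (fun x => E.U_cont_snd ht x) hC hg

/-- `s ↦ Q s (g s)` is continuous for continuous `g`. -/
lemma Q_apply_contOn {S : Set ℝ} {g : ℝ → X} (hg : ContinuousOn g S) :
    ContinuousOn (fun s => E.Q s (g s)) S := by
  refine contOn_apply_family (C := E.H + 1) ?_ ?_ hg
  · intro x
    have : Continuous fun s => E.Q s x := by
      simpa [E.Q_apply, Pi.sub_def] using (continuous_const.sub (E.P_cont x))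
    exact this.continuousOn
  · intro s _
    have := E.P_bound s
    calc ‖E.Q s‖ ≤ ‖(ContinuousLinearMap.id ℝ X)‖ + ‖E.P s‖ := norm_sub_le _ _
      _ ≤ E.H + 1 := by
        have : ‖(ContinuousLinearMap.id ℝ X)‖ ≤ 1 := ContinuousLinearMap.norm_id_le
        linarith

end EvolutionDichotomy

end Helpers2
section Helpers3
set_option linter.unusedSectionVars false
set_option linter.unusedVariables false

open Set

namespace EvolutionDichotomy

variable {X : Type*} [NormedAddCommGroup X] [NormedSpace ℝ X]
variable (E : EvolutionDichotomy X)

/-- Cocycle property for the inverses on the unstable directions. -/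
lemma V_cocycle {r t s : ℝ} (hrt : r ≤ t) (hts : t ≤ s) (x : X) :
    E.U t r (E.V r s (E.Q s x)) = E.V t s (E.Q s x) := by
  refine E.U_ker_inj (s := t) (t := s) hts ?_ ?_ ?_
  · rw [E.comm hrt, E.P_VQ (hrt.trans hts), map_zero]
  · exact E.P_VQ hts x
  · rw [E.U_comp hrt hts, E.UV (hrt.trans hts), E.UV hts]

/-- For `r ≤ s ≤ t` one has `U t r (V r s (Q s x)) = U t s (Q s x)`. -/
lemma U_VQ {r s t : ℝ} (hrs : r ≤ s) (hst : s ≤ t) (x : X) :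
    E.U t r (E.V r s (E.Q s x)) = E.U t s (E.Q s x) := by
  rw [← E.U_comp hrs hst, E.UV hrs]

/-- For `r ≤ s ≤ t` one has `V r t (U t s (Q s x)) = V r s (Q s x)`. -/
lemma V_UQ {r s t : ℝ} (hrs : r ≤ s) (hst : s ≤ t) (x : X) :
    E.V r t (E.U t s (E.Q s x)) = E.V r s (E.Q s x) := by
  rw [← E.U_VQ hrs hst, E.V_left' (hrs.trans hst) (E.P_VQ hrs x)]

/-- Continuity in `s` of `s ↦ V t s (Q s (g s))` on `[t, ∞)`. -/
lemma VQ_contOn [CompleteSpace X] {t : ℝ} (ht : 0 ≤ t) {g : ℝ → X}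
    (hg : ContinuousOn g (Ici 0)) :
    ContinuousOn (fun s => E.V t s (E.Q s (g s))) (Ici t) := by
  have hQg : ContinuousOn (fun s => E.Q s (g s)) (Ici t) :=
    E.Q_apply_contOn (hg.mono (Ici_subset_Ici.mpr ht))
  intro s₀ hs₀
  set w : ℝ → X := fun s => E.V t s (E.Q s (g s)) with hw
  have key : ∀ s ∈ Ici t, ‖w s - w s₀‖ ≤ E.N * ‖E.Q s (g s) - E.U s t (w s₀)‖ := by
    intro s hs
    have hker : E.P t (w s - w s₀) = 0 := by
      rw [map_sub, E.P_VQ hs, E.P_VQ hs₀, sub_zero]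
    have := E.norm_le_of_ker' (s := t) (t := s) hs hker
    rwa [map_sub, E.UV hs] at this
  have hlim : Tendsto (fun s => E.N * ‖E.Q s (g s) - E.U s t (w s₀)‖)
      (nhdsWithin s₀ (Ici t)) (nhds 0) := by
    have h1 : Tendsto (fun s => E.Q s (g s) - E.U s t (w s₀))
        (nhdsWithin s₀ (Ici t)) (nhds 0) := by
      have ha := hQg s₀ hs₀
      have hb := E.U_cont_fst t (w s₀) s₀ hs₀
      have hc : Tendsto (fun s => E.Q s (g s) - E.U s t (w s₀))
          (nhdsWithin s₀ (Ici t)) (nhds (E.Q s₀ (g s₀) - E.U s₀ t (w s₀))) := ha.sub hb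
      have hval : E.Q s₀ (g s₀) - E.U s₀ t (w s₀) = 0 := by
        rw [E.UV hs₀, sub_self]
      rwa [hval] at hc
    simpa using (h1.norm.const_mul E.N)
  have hzero : Tendsto (fun s => w s - w s₀) (nhdsWithin s₀ (Ici t)) (nhds 0) := by
    refine squeeze_zero_norm' ?_ hlim
    filter_upwards [self_mem_nhdsWithin] with s hs using key s hs
  have := hzero.add (tendsto_const_nhds : Tendsto (fun _ : ℝ => w s₀) _ (nhds (w s₀)))
  rw [zero_add] at this
  refine Tendsto.congr (fun s => by abel) this

/-- Integrability of `s ↦ V t s (Q s (g s))` on `(t', ∞)`. -/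
lemma VQ_integrableOn [CompleteSpace X] {t t' : ℝ} (ht : 0 ≤ t) (htt' : t ≤ t')
    {g : ℝ → X} (hg : ContinuousOn g (Ici 0)) {M : ℝ}
    (hM : ∀ s : ℝ, 0 ≤ s → ‖g s‖ ≤ M) :
    MeasureTheory.IntegrableOn (fun s => E.V t s (E.Q s (g s))) (Ioi t') := by
  have hmeas : MeasureTheory.AEStronglyMeasurable (fun s => E.V t s (E.Q s (g s)))
      (MeasureTheory.volume.restrict (Ioi t')) :=
    ((E.VQ_contOn ht hg).mono (Ioi_subset_Ici htt' |>.trans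
      (Ici_subset_Ici.mpr le_rfl))).aestronglyMeasurable measurableSet_Ioi
  refine MeasureTheory.Integrable.mono'
    (g := fun s => (E.N * M * Real.exp (E.β * t)) * Real.exp (-E.β * s)) ?_ hmeas ?_
  · exact ((exp_neg_integrableOn_Ioi t' E.β_pos).const_mul _)
  · filter_upwards [MeasureTheory.ae_restrict_mem measurableSet_Ioi] with s hs
    have hts : t ≤ s := htt'.trans (le_of_lt hs)
    have h0s : (0:ℝ) ≤ s := ht.trans hts
    have := E.Q_decay hts (g s)
    have h2 : ‖E.V t s (E.Q s (g s))‖ ≤ E.N * Real.exp (-E.β * (s - t)) * ‖g s‖ := this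
    refine h2.trans ?_
    have h3 : Real.exp (-E.β * (s - t)) = Real.exp (E.β * t) * Real.exp (-E.β * s) := by
      rw [← Real.exp_add]; ring_nf
    calc E.N * Real.exp (-E.β * (s - t)) * ‖g s‖
        ≤ E.N * Real.exp (-E.β * (s - t)) * M := by
          have h8 : (0:ℝ) ≤ E.N * Real.exp (-E.β * (s - t)) :=
            mul_nonneg E.N_pos.le (Real.exp_pos _).le
          exact mul_le_mul_of_nonneg_left (hM s h0s) h8
      _ = E.N * M * Real.exp (E.β * t) * Real.exp (-E.β * s) := by rw [h3]; ring

end EvolutionDichotomy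

end Helpers3
set_option maxHeartbeats 1000000 in
/-- any bounded mild solution on the half line can be represented via the
Green function: `ζ₀ := u(0) − ∫_0^∞ G(0,s) f(s) ds ∈ P(0)X` and
`u(t) = U(t,0) ζ₀ + ∫_0^∞ G(t,s) f(s) ds` for all `t ≥ 0`. -/
theorem half_line_mild_solution_representation
    {X : Type*} [NormedAddCommGroup X] [NormedSpace ℝ X] [CompleteSpace X]
    (E : EvolutionDichotomy X) (f u : ℝ → X)
    (hfc : ContinuousOn f (Set.Ici 0))
    (hfb : Bornology.IsBounded (f '' Set.Ici 0))
    (huc : ContinuousOn u (Set.Ici 0))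
    (hub : Bornology.IsBounded (u '' Set.Ici 0))
    (hmild : ∀ t : ℝ, 0 ≤ t →
      u t = E.U t 0 (u 0) + ∫ s in (0:ℝ)..t, E.U t s (f s)) :
    (E.P 0 (u 0 - ∫ s in Set.Ioi (0:ℝ), E.G 0 s (f s)) =
      u 0 - ∫ s in Set.Ioi (0:ℝ), E.G 0 s (f s)) ∧
    ∀ t : ℝ, 0 ≤ t →
      u t = E.U t 0 (u 0 - ∫ s in Set.Ioi (0:ℝ), E.G 0 s (f s)) +
        ∫ s in Set.Ioi (0:ℝ), E.G t s (f s) := by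
  classical
  obtain ⟨Mf, hMf⟩ := isBounded_iff_forall_norm_le.mp hfb
  have hMf' : ∀ s : ℝ, 0 ≤ s → ‖f s‖ ≤ Mf := fun s hs => hMf _ ⟨s, hs, rfl⟩
  obtain ⟨Mu, hMu⟩ := isBounded_iff_forall_norm_le.mp hub
  have hMu' : ∀ r : ℝ, 0 ≤ r → ‖u r‖ ≤ Mu := fun r hr => hMu _ ⟨r, hr, rfl⟩
  set w : ℝ → ℝ → X := fun t s => E.V t s (E.Q s (f s)) with hwdef
  have hw0_int : MeasureTheory.IntegrableOn (w 0) (Set.Ioi 0) :=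
    E.VQ_integrableOn le_rfl le_rfl hfc hMf'
  -- Step 1: the basic identity obtained by inverting the evolution family on the
  -- unstable directions.
  have step1 : ∀ t : ℝ, 0 ≤ t →
      E.V 0 t (E.Q t (u t)) = E.Q 0 (u 0) + ∫ s in (0:ℝ)..t, w 0 s := by
    intro t ht
    have hUf_cont : ContinuousOn (fun s => E.U t s (f s)) (Set.Icc 0 t) :=
      E.U_apply_contOn ht (hfc.mono Set.Icc_subset_Ici_self)
    have hUf_ii : IntervalIntegrable (fun s => E.U t s (f s)) MeasureTheory.volume 0 t := by
      rw [intervalIntegrable_iff, Set.uIoc_of_le ht]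
      exact (hUf_cont.integrableOn_Icc).mono_set Set.Ioc_subset_Icc_self
    have hQf_cont : ContinuousOn (fun s => E.Q s (f s)) (Set.Icc 0 t) :=
      E.Q_apply_contOn (hfc.mono Set.Icc_subset_Ici_self)
    have hUQf_cont : ContinuousOn (fun s => E.U t s (E.Q s (f s))) (Set.Icc 0 t) :=
      E.U_apply_contOn ht hQf_cont
    have hUQf_ii : IntervalIntegrable (fun s => E.U t s (E.Q s (f s)))
        MeasureTheory.volume 0 t := by
      rw [intervalIntegrable_iff, Set.uIoc_of_le ht]
      exact (hUQf_cont.integrableOn_Icc).mono_set Set.Ioc_subset_Icc_self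
    have h1 : E.Q t (u t)
        = E.U t 0 (E.Q 0 (u 0)) + ∫ s in (0:ℝ)..t, E.U t s (E.Q s (f s)) := by
      rw [hmild t ht, map_add, E.comm_Q ht]
      congr 1
      rw [← ContinuousLinearMap.intervalIntegral_comp_comm _ hUf_ii]
      refine intervalIntegral.integral_congr fun s hs => ?_
      rw [Set.uIcc_of_le ht] at hs
      exact E.comm_Q hs.2 (f s)
    rw [h1, map_add]
    congr 1
    · exact E.V_left' ht (E.P_Q 0 (u 0))
    · rw [← ContinuousLinearMap.intervalIntegral_comp_comm _ hUQf_ii]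
      refine intervalIntegral.integral_congr fun s hs => ?_
      rw [Set.uIcc_of_le ht] at hs
      exact E.V_UQ hs.1 hs.2 (f s)
  -- Step 2: letting `t → ∞` identifies the unstable component of `u 0`.
  have hlim1 : Tendsto (fun t => E.V 0 t (E.Q t (u t))) atTop (nhds 0) := by
    refine squeeze_zero_norm'
      (a := fun t : ℝ => E.N * Real.exp (-(E.β * t)) * Mu) ?_ ?_
    · filter_upwards [eventually_ge_atTop (0:ℝ)] with t ht
      have h0 : ‖E.V 0 t (E.Q t (u t))‖ ≤ E.N * Real.exp (-E.β * (t - 0)) * ‖u t‖ :=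
        E.Q_decay ht (u t)
      calc ‖E.V 0 t (E.Q t (u t))‖
          ≤ E.N * Real.exp (-E.β * (t - 0)) * ‖u t‖ := h0
        _ ≤ E.N * Real.exp (-(E.β * t)) * Mu := by
            rw [sub_zero, neg_mul]
            exact mul_le_mul_of_nonneg_left (hMu' t ht)
              (mul_nonneg E.N_pos.le (Real.exp_pos _).le)
    · have h1 : Tendsto (fun t : ℝ => E.β * t) atTop atTop :=
        Tendsto.const_mul_atTop E.β_pos tendsto_id
      have h2 : Tendsto (fun t : ℝ => Real.exp (-(E.β * t))) atTop (nhds 0) :=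
        Real.tendsto_exp_neg_atTop_nhds_zero.comp h1
      have h3 := (h2.const_mul E.N).mul_const Mu
      simpa using h3
  have hlim2 : Tendsto (fun t : ℝ => E.Q 0 (u 0) + ∫ s in (0:ℝ)..t, w 0 s) atTop
      (nhds (E.Q 0 (u 0) + ∫ s in Set.Ioi (0:ℝ), w 0 s)) :=
    tendsto_const_nhds.add
      (MeasureTheory.intervalIntegral_tendsto_integral_Ioi 0 hw0_int tendsto_id)
  have key0 : E.Q 0 (u 0) + (∫ s in Set.Ioi (0:ℝ), w 0 s) = 0 := by
    have heq : (fun t : ℝ => E.Q 0 (u 0) + ∫ s in (0:ℝ)..t, w 0 s)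
        =ᶠ[atTop] (fun t => E.V 0 t (E.Q t (u t))) := by
      filter_upwards [eventually_ge_atTop (0:ℝ)] with t ht
      exact (step1 t ht).symm
    exact tendsto_nhds_unique (Filter.Tendsto.congr' heq hlim2) hlim1
  have hQu0 : E.Q 0 (u 0) = -∫ s in Set.Ioi (0:ℝ), w 0 s :=
    eq_neg_iff_add_eq_zero.mpr key0
  -- the Green-function integral at time `0`
  have hG0 : (∫ s in Set.Ioi (0:ℝ), E.G 0 s (f s)) = E.Q 0 (u 0) := by
    have h1 : Set.EqOn (fun s => E.G 0 s (f s)) (fun s => -(w 0 s)) (Set.Ioi 0) := by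
      intro s hs
      have hns : ¬ s < (0:ℝ) := not_lt.mpr (le_of_lt hs)
      simp only [EvolutionDichotomy.G, if_neg hns]
      rfl
    rw [MeasureTheory.setIntegral_congr_fun measurableSet_Ioi h1,
      MeasureTheory.integral_neg, hQu0]
  have hzeta : u 0 - (∫ s in Set.Ioi (0:ℝ), E.G 0 s (f s)) = E.P 0 (u 0) := by
    rw [hG0, E.Q_apply, sub_sub_cancel]
  refine ⟨by rw [hzeta]; exact E.P_proj 0 (u 0), ?_⟩
  -- Step 3: the representation formula for each `t ≥ 0`.
  intro t ht
  rw [hzeta]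
  have hwt_int : MeasureTheory.IntegrableOn (w t) (Set.Ioi t) :=
    E.VQ_integrableOn ht le_rfl hfc hMf'
  have hw0_int_t : MeasureTheory.IntegrableOn (w 0) (Set.Ioi t) :=
    hw0_int.mono_set (Set.Ioi_subset_Ioi ht)
  have hw0_int_c : MeasureTheory.IntegrableOn (w 0) (Set.Ioc 0 t) :=
    hw0_int.mono_set Set.Ioc_subset_Ioi_self
  have hUf_cont : ContinuousOn (fun s => E.U t s (f s)) (Set.Icc 0 t) :=
    E.U_apply_contOn ht (hfc.mono Set.Icc_subset_Ici_self)
  have hUf_int : MeasureTheory.IntegrableOn (fun s => E.U t s (f s)) (Set.Ioc 0 t) :=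
    (hUf_cont.integrableOn_Icc).mono_set Set.Ioc_subset_Icc_self
  have hPUf_cont : ContinuousOn (fun s => E.P t (E.U t s (f s))) (Set.Icc 0 t) :=
    (E.P t).continuous.comp_continuousOn hUf_cont
  have hPUf_int : MeasureTheory.IntegrableOn (fun s => E.P t (E.U t s (f s)))
      (Set.Ioc 0 t) :=
    (hPUf_cont.integrableOn_Icc).mono_set Set.Ioc_subset_Icc_self
  have hUQf_cont : ContinuousOn (fun s => E.U t s (E.Q s (f s))) (Set.Icc 0 t) :=
    E.U_apply_contOn ht (E.Q_apply_contOn (hfc.mono Set.Icc_subset_Ici_self))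
  have hUQf_int : MeasureTheory.IntegrableOn (fun s => E.U t s (E.Q s (f s)))
      (Set.Ioc 0 t) :=
    (hUQf_cont.integrableOn_Icc).mono_set Set.Ioc_subset_Icc_self
  -- the Green function on `(t, ∞)`
  have hGt_Ioi : Set.EqOn (fun s => -(w t s)) (fun s => E.G t s (f s)) (Set.Ioi t) := by
    intro s hs
    have hns : ¬ s < t := not_lt.mpr (le_of_lt hs)
    simp only [EvolutionDichotomy.G, if_neg hns]
    rfl
  have hG_Ioi_int : MeasureTheory.IntegrableOn (fun s => E.G t s (f s)) (Set.Ioi t) :=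
    MeasureTheory.IntegrableOn.congr_fun
      (f := fun s => -(w t s)) (hwt_int.neg) hGt_Ioi measurableSet_Ioi
  -- the Green function on `(0, t]`, up to a null set
  have hne : ∀ᵐ s : ℝ, s ≠ t := by
    rw [MeasureTheory.ae_iff]
    have : {s : ℝ | ¬ s ≠ t} = {t} := by ext s; simp
    rw [this]
    exact MeasureTheory.measure_singleton t
  have hGae : (fun s => E.G t s (f s))
      =ᵐ[MeasureTheory.volume.restrict (Set.Ioc 0 t)]
      (fun s => E.P t (E.U t s (f s))) := by
    filter_upwards [MeasureTheory.ae_restrict_mem measurableSet_Ioc,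
      MeasureTheory.ae_restrict_of_ae hne] with s hs hst
    have hlt : s < t := lt_of_le_of_ne hs.2 hst
    simp only [EvolutionDichotomy.G, if_pos hlt]
    rfl
  have hG_Ioc_int : MeasureTheory.IntegrableOn (fun s => E.G t s (f s)) (Set.Ioc 0 t) :=
    hPUf_int.congr hGae.symm
  have hsplit : (∫ s in Set.Ioi (0:ℝ), E.G t s (f s))
      = (∫ s in Set.Ioc 0 t, E.G t s (f s)) + ∫ s in Set.Ioi t, E.G t s (f s) := by
    rw [← MeasureTheory.setIntegral_union (Set.Ioc_disjoint_Ioi le_rfl)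
      measurableSet_Ioi hG_Ioc_int hG_Ioi_int, Set.Ioc_union_Ioi_eq_Ioi ht]
  have hIoc : (∫ s in Set.Ioc 0 t, E.G t s (f s))
      = ∫ s in Set.Ioc 0 t, E.P t (E.U t s (f s)) :=
    MeasureTheory.integral_congr_ae hGae
  have hIoi : (∫ s in Set.Ioi t, E.G t s (f s)) = -∫ s in Set.Ioi t, w t s := by
    rw [← MeasureTheory.setIntegral_congr_fun measurableSet_Ioi hGt_Ioi,
      MeasureTheory.integral_neg]
  have hsplitw : (∫ s in Set.Ioi (0:ℝ), E.U t 0 (w 0 s))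
      = (∫ s in Set.Ioc 0 t, E.U t 0 (w 0 s)) + ∫ s in Set.Ioi t, E.U t 0 (w 0 s) := by
    rw [← MeasureTheory.setIntegral_union (Set.Ioc_disjoint_Ioi le_rfl)
      measurableSet_Ioi ((E.U t 0).integrable_comp hw0_int_c)
      ((E.U t 0).integrable_comp hw0_int_t), Set.Ioc_union_Ioi_eq_Ioi ht]
  have hP0 : E.P 0 (u 0) = u 0 + ∫ s in Set.Ioi (0:ℝ), w 0 s := by
    rw [← hzeta, hG0, hQu0, sub_neg_eq_add]
  have hU0 : E.U t 0 (E.P 0 (u 0))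
      = E.U t 0 (u 0) + ∫ s in Set.Ioi (0:ℝ), E.U t 0 (w 0 s) := by
    rw [hP0, map_add]
    congr 1
    exact ((E.U t 0).integral_comp_comm hw0_int).symm
  have hIocU : (∫ s in Set.Ioc 0 t, E.U t 0 (w 0 s))
      = ∫ s in Set.Ioc 0 t, E.U t s (E.Q s (f s)) :=
    MeasureTheory.setIntegral_congr_fun measurableSet_Ioc fun s hs =>
      E.U_VQ hs.1.le hs.2 (f s)
  have hIoiU : (∫ s in Set.Ioi t, E.U t 0 (w 0 s)) = ∫ s in Set.Ioi t, w t s :=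
    MeasureTheory.setIntegral_congr_fun measurableSet_Ioi fun s hs =>
      E.V_cocycle ht (le_of_lt hs) (f s)
  calc u t = E.U t 0 (u 0) + ∫ s in (0:ℝ)..t, E.U t s (f s) := hmild t ht
    _ = E.U t 0 (u 0) + ∫ s in Set.Ioc 0 t, E.U t s (f s) := by
        rw [intervalIntegral.integral_of_le ht]
    _ = E.U t 0 (u 0)
        + ∫ s in Set.Ioc 0 t, (E.U t s (E.Q s (f s)) + E.P t (E.U t s (f s))) := by
        congr 1
        refine MeasureTheory.setIntegral_congr_fun measurableSet_Ioc fun s hs => ?_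
        rw [E.Q_apply, map_sub, E.comm hs.2]
        abel
    _ = E.U t 0 (u 0) + ((∫ s in Set.Ioc 0 t, E.U t s (E.Q s (f s)))
        + ∫ s in Set.Ioc 0 t, E.P t (E.U t s (f s))) := by
        rw [MeasureTheory.integral_add hUQf_int hPUf_int]
    _ = E.U t 0 (E.P 0 (u 0)) + ∫ s in Set.Ioi (0:ℝ), E.G t s (f s) := by
        rw [hU0, hsplitw, hIocU, hIoiU, hsplit, hIoc, hIoi]
        abel
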